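/- Every tree T that is a caterpillar is nonrepetitively 148-choosable, assuming every path can be 148-list-coloured so that no subpath is repetitively coloured and no subpath is almost repetitively coloured. -/

import Mathlib

/-- A list of colours is repetitive if it has the form `l ++ l` with `l` nonempty. -/
def RepList {α : Type*} (m : List α) : Prop :=
  ∃ l : List α, l ≠ [] ∧ m = l ++ l

/-- A list of colours is almost repetitive if it has the form `l ++ x :: l` (odd order,
`ψ(v_i) = ψ(v_{p+i+1})` for `i ∈ [1,p]`) or `l ++ x :: y :: l` (even order,
`ψ(v_i) = ψ(v_{p+i+1})` for `i ∈ [1,p-1]`) with `l` nonempty. -/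
def AlmostRepList {α : Type*} (m : List α) : Prop :=
  ∃ l : List α, l ≠ [] ∧
    ((∃ x, m = l ++ x :: l) ∨ (∃ x y, m = l ++ x :: y :: l))

/-- A colouring `φ` of `G` is nonrepetitive if no path of `G` is repetitively coloured. -/
def Nonrepetitive {V α : Type*} (G : SimpleGraph V) (φ : V → α) : Prop :=
  ∀ ⦃u v : V⦄ (p : G.Walk u v), p.IsPath → ¬ RepList (p.support.map φ)

/-- A caterpillar: a tree having a path (the spine) such that every vertex is at
distance at most 1 from the spine. -/
def IsCaterpillar {V : Type*} (G : SimpleGraph V) : Prop :=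
  G.Connected ∧ G.IsAcyclic ∧
    ∃ (u v : V) (p : G.Walk u v), p.IsPath ∧
      ∀ w : V, w ∈ p.support ∨ ∃ x ∈ p.support, G.Adj x w

namespace CatAux

variable {α : Type*}

lemma RepList.rev {m : List α} (h : RepList m) : RepList m.reverse := by
  obtain ⟨l, hl, rfl⟩ := h
  exact ⟨l.reverse, by simpa using hl, by simp⟩

lemma AlmostRepList.rev {m : List α} (h : AlmostRepList m) : AlmostRepList m.reverse := by
  obtain ⟨l, hl, h | h⟩ := h
  · obtain ⟨x, rfl⟩ := h
    exact ⟨l.reverse, by simpa using hl, Or.inl ⟨x, by simp⟩⟩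
  · obtain ⟨x, y, rfl⟩ := h
    exact ⟨l.reverse, by simpa using hl, Or.inr ⟨y, x, by simp⟩⟩

lemma not_rep_singleton (a : α) : ¬ RepList [a] := by
  rintro ⟨l, hl, he⟩
  cases l with
  | nil => exact hl rfl
  | cons x l' => simp [List.cons_append] at he

lemma rep_cons {c : α} {t : List α} (h : RepList (c :: t)) : t = [c] ∨ AlmostRepList t := by
  obtain ⟨l, hl, he⟩ := h
  cases l with
  | nil => exact absurd rfl hl
  | cons a l₀ =>
    simp only [List.cons_append, List.cons.injEq] at he
    obtain ⟨rfl, rfl⟩ := he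
    cases l₀ with
    | nil => exact Or.inl rfl
    | cons b l₁ => exact Or.inr ⟨b :: l₁, by simp, Or.inl ⟨c, rfl⟩⟩

lemma rep_cons_concat {c e : α} {t : List α} (h : RepList (c :: (t ++ [e]))) :
    (t = [] ∧ e = c) ∨ (∃ b, t = [b, c]) ∨ AlmostRepList t := by
  obtain ⟨l, hl, he⟩ := h
  cases l with
  | nil => exact absurd rfl hl
  | cons a l₀ =>
    simp only [List.cons_append, List.cons.injEq] at he
    obtain ⟨rfl, he⟩ := he
    rcases l₀.eq_nil_or_concat with rfl | ⟨l₁, b, rfl⟩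
    · have hlen := congrArg List.length he
      simp at hlen
      subst hlen
      simp at he
      exact Or.inl ⟨rfl, he⟩
    · have he' : t ++ [e] = (l₁ ++ b :: c :: l₁) ++ [b] := by
        simpa [List.concat_eq_append, List.append_assoc] using he
      obtain ⟨h4, h5⟩ := List.append_inj' he' (by simp)
      obtain rfl := h4
      obtain rfl : e = b := by simpa using h5
      cases l₁ with
      | nil => exact Or.inr (Or.inl ⟨e, rfl⟩)
      | cons x l₂ => exact Or.inr (Or.inr ⟨x :: l₂, by simp, Or.inr ⟨e, c, rfl⟩⟩)

end CatAux


/-- Assuming every path can be 148-list-coloured so that no subpath is repetitively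
coloured and no subpath is almost repetitively coloured, every caterpillar is
nonrepetitively 148-choosable. -/
theorem caterpillar_choosable
    (hpath : ∀ (n : ℕ) (L : Fin n → Finset ℕ), (∀ v, 148 ≤ (L v).card) →
      ∃ φ : Fin n → ℕ, (∀ v, φ v ∈ L v) ∧
        ∀ ⦃u v : Fin n⦄ (p : (SimpleGraph.pathGraph n).Walk u v), p.IsPath →
          ¬ RepList (p.support.map φ) ∧ ¬ AlmostRepList (p.support.map φ)) :
    ∀ (V : Type) (G : SimpleGraph V), IsCaterpillar G →
      ∀ L : V → Finset ℕ, (∀ v, 148 ≤ (L v).card) →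
        ∃ φ : V → ℕ, (∀ v, φ v ∈ L v) ∧ Nonrepetitive G φ := by
  classical
  intro V G hG L hL
  obtain ⟨hconn, hacyc, u0, v0, P, hP, hcov⟩ := hG
  set s : List V := P.support with hs
  have hnds : s.Nodup := hP.support_nodup
  set n : ℕ := s.length with hn
  have hn0 : 0 < n := List.length_pos_iff.mpr P.support_ne_nil
  set f : ℕ → V := fun k => s.getD k u0 with hf
  have hfget : ∀ {k : ℕ} (h : k < n), f k = s.get ⟨k, h⟩ := by
    intro k h
    simp [hf, List.getD_eq_getElem?_getD, List.getElem?_eq_getElem h, List.get_eq_getElem]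
  have hfmem : ∀ {k : ℕ}, k < n → f k ∈ s := by
    intro k h; rw [hfget h]; exact s.get_mem _
  have hfinj : ∀ {k l : ℕ}, k < n → l < n → f k = f l → k = l := by
    intro k l hk hl he
    rw [hfget hk, hfget hl] at he
    simpa using congrArg Fin.val (hnds.get_inj_iff.mp he)
  have hidxf : ∀ {k : ℕ}, (h : k < n) → s.idxOf (f k) = k := by
    intro k h
    rw [hfget h]
    simp [List.get_eq_getElem]
    exact hnds.idxOf_getElem k h
  have hidxlt : ∀ {x : V}, x ∈ s → s.idxOf x < n := fun hx => List.idxOf_lt_length_iff.mpr hx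
  have hfidx : ∀ {x : V}, x ∈ s → f (s.idxOf x) = x := by
    intro x hx
    rw [hfget (hidxlt hx)]
    exact List.idxOf_get _
  have hadjf : ∀ k, k + 1 < n → G.Adj (f k) (f (k + 1)) := by
    intro k hk
    have hch := P.isChain_adj_support
    rw [← hs] at hch
    rw [hfget (by omega : k < n), hfget hk]
    exact hch.getElem k (by omega)
  obtain ⟨ψ, hψmem, hψgood⟩ := hpath n (fun i => L (f i.val)) (fun i => hL _)
  set ψ' : ℕ → ℕ := fun k => if h : k < n then ψ ⟨k, h⟩ else 0 with hψ'
  set φ0 : V → ℕ := fun x => ψ' (s.idxOf x) with hφ0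
  have hφ0f : ∀ {k : ℕ}, k < n → φ0 (f k) = ψ' k := by
    intro k hk; rw [hφ0]; simp only []; rw [hidxf hk]
  -- segment construction
  have seg : ∀ (d i : ℕ) (h : i + d < n),
      ∃ (pw : (SimpleGraph.pathGraph n).Walk ⟨i, by omega⟩ ⟨i + d, h⟩)
        (gw : G.Walk (f i) (f (i + d))),
        pw.support.map Fin.val = List.range' i (d + 1) ∧
        gw.support = (List.range' i (d + 1)).map f := by
    intro d
    induction d with
    | zero =>
      intro i h
      exact ⟨SimpleGraph.Walk.nil, SimpleGraph.Walk.nil, by simp, by simp⟩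
    | succ d ih =>
      intro i h
      obtain ⟨pw, gw, hpw, hgw⟩ := ih i (by omega)
      have hadj1 : (SimpleGraph.pathGraph n).Adj ⟨i + d, by omega⟩ ⟨i + d + 1, by omega⟩ :=
        SimpleGraph.pathGraph_adj.mpr (Or.inl rfl)
      refine ⟨pw.concat hadj1, gw.concat (hadjf (i + d) (by omega)), ?_, ?_⟩
      · rw [SimpleGraph.Walk.support_concat, List.range'_1_concat]
        simp [List.concat_eq_append, hpw]
      · rw [SimpleGraph.Walk.support_concat, List.range'_1_concat]
        simp [List.concat_eq_append, hgw]
  have key0 : ∀ (d i : ℕ) (h : i + d < n),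
      ∃ gw : G.Walk (f i) (f (i + d)), gw.IsPath ∧
        gw.support = (List.range' i (d + 1)).map f ∧
        ¬ RepList (gw.support.map φ0) ∧ ¬ AlmostRepList (gw.support.map φ0) := by
    intro d i h
    obtain ⟨pw, gw, hpw, hgw⟩ := seg d i h
    have hnrange : (List.range' i (d + 1)).Nodup := List.nodup_range'
    have hpwpath : pw.IsPath := by
      rw [SimpleGraph.Walk.isPath_def]
      exact (hpw ▸ hnrange).of_map _
    have hgwpath : gw.IsPath := by
      rw [SimpleGraph.Walk.isPath_def, hgw]
      refine hnrange.map_on ?_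
      intro a ha b hb hab
      rw [List.mem_range'_1] at ha hb
      exact hfinj (by omega) (by omega) hab
    have hmapeq : gw.support.map φ0 = pw.support.map ψ := by
      have h1 : pw.support.map ψ = (pw.support.map Fin.val).map ψ' := by
        rw [List.map_map]
        refine List.map_congr_left ?_
        intro u _
        simp [hψ', u.isLt]
      rw [h1, hpw, hgw, List.map_map]
      refine List.map_congr_left ?_
      intro k hk
      rw [List.mem_range'_1] at hk
      exact hφ0f (by omega)
    obtain ⟨h1, h2⟩ := hψgood pw hpwpath
    rw [← hmapeq] at h1 h2
    exact ⟨gw, hgwpath, hgw, h1, h2⟩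
  have uniq : ∀ {x y : V} (q q' : G.Walk x y), q.IsPath → q'.IsPath → q = q' := by
    intro x y q q' hq hq'
    exact Subtype.ext_iff.mp (hacyc.path_unique ⟨q, hq⟩ ⟨q', hq'⟩)
  have H3aux : ∀ (x y : V) (q : G.Walk x y), q.IsPath → x ∈ s → y ∈ s →
      s.idxOf x ≤ s.idxOf y →
      (∀ z ∈ q.support, z ∈ s) ∧
      ¬ RepList (q.support.map φ0) ∧ ¬ AlmostRepList (q.support.map φ0) ∧
      q.support.length = s.idxOf y + 1 - s.idxOf x := by
    intro x y q hq hx hy hle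
    obtain ⟨gw, hgwp, hsup, hr, ha⟩ :=
      key0 (s.idxOf y - s.idxOf x) (s.idxOf x) (by have := hidxlt hy; omega)
    have e1 : f (s.idxOf x) = x := hfidx hx
    have e2 : f (s.idxOf x + (s.idxOf y - s.idxOf x)) = y := by
      rw [Nat.add_sub_cancel' hle]; exact hfidx hy
    have hq' : q = gw.copy e1 e2 := by
      refine uniq q (gw.copy e1 e2) hq ?_
      rw [SimpleGraph.Walk.isPath_copy]
      exact hgwp
    have hsup' : q.support = (List.range' (s.idxOf x)
        ((s.idxOf y - s.idxOf x) + 1)).map f := by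
      rw [hq', SimpleGraph.Walk.support_copy]; exact hsup
    refine ⟨?_, ?_, ?_, ?_⟩
    · intro z hz
      rw [hsup'] at hz
      obtain ⟨k, hk, rfl⟩ := List.mem_map.mp hz
      rw [List.mem_range'_1] at hk
      have hyn := hidxlt hy
      exact hfmem (by omega)
    · rw [hq', SimpleGraph.Walk.support_copy]; exact hr
    · rw [hq', SimpleGraph.Walk.support_copy]; exact ha
    · rw [hsup', List.length_map, List.length_range']; omega
  have H3 : ∀ (x y : V) (q : G.Walk x y), q.IsPath → x ∈ s → y ∈ s →
      (∀ z ∈ q.support, z ∈ s) ∧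
      ¬ RepList (q.support.map φ0) ∧ ¬ AlmostRepList (q.support.map φ0) ∧
      q.support.length = max (s.idxOf x) (s.idxOf y) + 1
        - min (s.idxOf x) (s.idxOf y) := by
    intro x y q hq hx hy
    rcases le_total (s.idxOf x) (s.idxOf y) with hle | hle
    · obtain ⟨h1, h2, h3, h4⟩ := H3aux x y q hq hx hy hle
      exact ⟨h1, h2, h3, by omega⟩
    · obtain ⟨h1, h2, h3, h4⟩ := H3aux y x q.reverse hq.reverse hy hx hle
      have hrev : q.reverse.support = q.support.reverse := SimpleGraph.Walk.support_reverse _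
      rw [hrev] at h1 h2 h3 h4
      refine ⟨fun z hz => h1 z (by simpa using hz), ?_, ?_, ?_⟩
      · intro hcon
        exact h2 (by rw [List.map_reverse]; exact CatAux.RepList.rev hcon)
      · intro hcon
        exact h3 (by rw [List.map_reverse]; exact CatAux.AlmostRepList.rev hcon)
      · rw [List.length_reverse] at h4; omega
  have hNbr : ∀ a, a ∉ s → ∃ x, x ∈ s ∧ G.Adj x a := by
    intro a ha
    rcases hcov a with h | ⟨x, hx, hadj⟩
    · exact absurd h ha
    · exact ⟨x, hx, hadj⟩
  choose xa hxs hxadj using hNbr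
  have U1 : ∀ a (ha : a ∉ s) (x : V), x ∈ s → G.Adj x a → x = xa a ha := by
    intro a ha x hx hadj
    by_contra hne
    refine ha ((H3 x (xa a ha)
      (SimpleGraph.Walk.cons hadj (SimpleGraph.Walk.cons (hxadj a ha).symm SimpleGraph.Walk.nil))
      ?_ hx (hxs a ha)).1 a (by simp))
    rw [SimpleGraph.Walk.isPath_def]
    simp
    refine ⟨⟨fun h => ha (h ▸ hx), hne⟩, fun h => ha (h ▸ hxs a ha)⟩
  have U0 : ∀ a b : V, a ∉ s → b ∉ s → ¬ G.Adj a b := by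
    intro a b ha hb hadj
    by_cases hxy : xa a ha = xa b hb
    · have hadj2 : G.Adj (xa a ha) b := hxy ▸ hxadj b hb
      have heq := uniq
        (SimpleGraph.Walk.cons (hxadj a ha) (SimpleGraph.Walk.cons hadj SimpleGraph.Walk.nil))
        (SimpleGraph.Walk.cons hadj2 SimpleGraph.Walk.nil) ?_ ?_
      · have := congrArg (fun w => SimpleGraph.Walk.length w) heq
        simp at this
      · rw [SimpleGraph.Walk.isPath_def]
        simp
        exact ⟨⟨fun h => ha (h.symm ▸ hxs a ha), fun h => hb (h.symm ▸ hxs a ha)⟩, hadj.ne⟩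
      · rw [SimpleGraph.Walk.isPath_def]
        simp
        exact fun h => hb (h.symm ▸ hxs a ha)
    · refine ha ((H3 _ _
        (SimpleGraph.Walk.cons (hxadj a ha) (SimpleGraph.Walk.cons hadj
          (SimpleGraph.Walk.cons (hxadj b hb).symm SimpleGraph.Walk.nil)))
        ?_ (hxs a ha) (hxs b hb)).1 a (by simp))
      rw [SimpleGraph.Walk.isPath_def]
      simp
      refine ⟨⟨fun h => ha (h.symm ▸ hxs a ha), fun h => hb (h.symm ▸ hxs a ha), hxy⟩,
        ⟨hadj.ne, fun h => ha (h ▸ hxs b hb)⟩, fun h => hb (h ▸ hxs b hb)⟩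
  have U2 : ∀ x y : V, x ∈ s → y ∈ s → G.Adj x y →
      s.idxOf y = s.idxOf x + 1 ∨ s.idxOf x = s.idxOf y + 1 := by
    intro x y hx hy hadj
    have hp1 : (SimpleGraph.Walk.cons hadj SimpleGraph.Walk.nil : G.Walk x y).IsPath := by
      rw [SimpleGraph.Walk.isPath_def]
      simp [hadj.ne]
    have hlen := (H3 x y (SimpleGraph.Walk.cons hadj SimpleGraph.Walk.nil) hp1 hx hy).2.2.2
    have hlen2 : (SimpleGraph.Walk.cons hadj SimpleGraph.Walk.nil : G.Walk x y).support.length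
      = 2 := by simp
    have hne : s.idxOf x ≠ s.idxOf y := by
      intro h
      exact hadj.ne (by rw [← hfidx hx, ← hfidx hy, h])
    omega
  have hpick : ∀ a (ha : a ∉ s), ∃ c, c ∈ L a ∧
      c ≠ φ0 (f (s.idxOf (xa a ha))) ∧ c ≠ φ0 (f (s.idxOf (xa a ha) - 1)) ∧
      c ≠ φ0 (f (s.idxOf (xa a ha) + 1)) := by
    intro a ha
    set i := s.idxOf (xa a ha) with hi
    have hne : (L a \ {φ0 (f i), φ0 (f (i - 1)), φ0 (f (i + 1))}).Nonempty := by
      rw [Finset.sdiff_nonempty]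
      intro hsub
      have h1 := Finset.card_le_card hsub
      have h2 : ({φ0 (f i), φ0 (f (i - 1)), φ0 (f (i + 1))} : Finset ℕ).card ≤ 3 := by
        refine le_trans (Finset.card_insert_le _ _) ?_
        have := Finset.card_insert_le (φ0 (f (i - 1))) ({φ0 (f (i + 1))} : Finset ℕ)
        simp at this ⊢
        omega
      have := hL a
      omega
    obtain ⟨c, hc⟩ := hne
    rw [Finset.mem_sdiff] at hc
    obtain ⟨hc1, hc2⟩ := hc
    simp only [Finset.mem_insert, Finset.mem_singleton, not_or] at hc2
    exact ⟨c, hc1, hc2.1, hc2.2.1, hc2.2.2⟩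
  choose pick hp1 hp2 hp3 hp4 using hpick
  set φ : V → ℕ := fun v => if h : v ∈ s then φ0 v else pick v h with hφ
  have hφs : ∀ {z : V}, z ∈ s → φ z = φ0 z := by
    intro z hz; simp [hφ, hz]
  have hφmem : ∀ v, φ v ∈ L v := by
    intro v
    by_cases h : v ∈ s
    · rw [hφs h]
      have hi := hidxlt h
      have : φ0 v = ψ ⟨s.idxOf v, hi⟩ := by
        simp only [hφ0, hψ']
        rw [dif_pos hi]
      rw [this]
      have := hψmem ⟨s.idxOf v, hi⟩
      rwa [hfidx h] at this
    · simpa [hφ, h] using hp1 v h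
  have K2 : ∀ a (ha : a ∉ s) (x : V), x ∈ s → G.Adj x a → φ a ≠ φ0 x := by
    intro a ha x hx hadj
    rw [U1 a ha x hx hadj, ← hfidx (hxs a ha)]
    have : φ a = pick a ha := by simp [hφ, ha]
    rw [this]
    exact hp2 a ha
  have K3 : ∀ a (ha : a ∉ s) (y : V), y ∈ s → G.Adj (xa a ha) y → φ a ≠ φ0 y := by
    intro a ha y hy hadj
    have hφa : φ a = pick a ha := by simp [hφ, ha]
    rcases U2 _ _ (hxs a ha) hy hadj with h | h
    · have : y = f (s.idxOf (xa a ha) + 1) := by rw [← h, hfidx hy]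
      rw [this, hφa]
      exact hp4 a ha
    · have : y = f (s.idxOf (xa a ha) - 1) := by
        rw [show s.idxOf (xa a ha) - 1 = s.idxOf y by omega, hfidx hy]
      rw [this, hφa]
      exact hp3 a ha
  have mapφ0 : ∀ {x y : V} (q : G.Walk x y), (∀ z ∈ q.support, z ∈ s) →
      q.support.map φ = q.support.map φ0 := by
    intro x y q hsub
    refine List.map_congr_left ?_
    intro z hz
    exact hφs (hsub z hz)
  have key : ∀ (a b : V) (q : G.Walk a b), q.IsPath → a ∉ s →
      ¬ RepList (q.support.map φ) := by
    intro a b q hq ha hrep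
    cases q with
    | nil => exact CatAux.not_rep_singleton (φ a) (by simpa using hrep)
    | @cons _ c _ h q' =>
      have hc : c ∈ s := by
        by_contra hcs
        exact U0 a c ha hcs h
      have hq' : q'.IsPath := hq.of_cons
      have hrep' : RepList (φ a :: q'.support.map φ) := by
        simpa [SimpleGraph.Walk.support_cons] using hrep
      by_cases hb : b ∈ s
      · obtain ⟨hsub, hnr, hna, _⟩ := H3 c b q' hq' hc hb
        rw [mapφ0 q' hsub] at hrep'
        rcases CatAux.rep_cons hrep' with ht | ht
        · have h1 := q'.support_eq_cons
          rw [h1] at ht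
          simp only [List.map_cons, List.cons.injEq] at ht
          exact K2 a ha c hc h.symm ht.1.symm
        · exact hna ht
      · obtain ⟨w, rfl⟩ : ∃ w : G.Walk b c, q' = w.reverse :=
          ⟨q'.reverse, (q'.reverse_reverse).symm⟩
        cases w with
        | nil => exact hb hc
        | @cons _ d _ h₂ r =>
          have hd : d ∈ s := by
            by_contra hds
            exact U0 b d hb hds h₂
          have hconsp : (SimpleGraph.Walk.cons h₂ r).IsPath :=
            (SimpleGraph.Walk.isPath_reverse_iff _).mp hq'
          have hrp : r.IsPath := hconsp.of_cons
          have hrrp : r.reverse.IsPath := hrp.reverse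
          obtain ⟨hsub, hnr, hna, _⟩ := H3 c d r.reverse hrrp hc hd
          have hsupeq : (SimpleGraph.Walk.cons h₂ r).reverse.support.map φ
              = r.reverse.support.map φ0 ++ [φ b] := by
            rw [SimpleGraph.Walk.support_reverse, SimpleGraph.Walk.support_cons]
            rw [List.reverse_cons, List.map_append, ← SimpleGraph.Walk.support_reverse]
            rw [mapφ0 r.reverse hsub]
            simp
          rw [hsupeq] at hrep'
          rcases CatAux.rep_cons_concat hrep' with ⟨ht, _⟩ | ⟨bb, ht⟩ | ht
          · rw [List.map_eq_nil_iff] at ht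
            exact r.reverse.support_ne_nil ht
          · have hlen : r.reverse.support.length = 2 := by
              have := congrArg List.length ht
              simpa using this
            by_cases hdc : d = c
            · subst hdc
              have hnil := uniq r.reverse SimpleGraph.Walk.nil hrrp (SimpleGraph.Walk.IsPath.nil)
              rw [hnil] at hlen
              simp at hlen
            · have h1 := r.reverse.support_eq_cons
              rw [h1] at ht hlen
              cases htl : r.reverse.support.tail with
              | nil => rw [htl] at ht; simp at ht
              | cons z tl =>
                rw [htl] at ht hlen
                simp only [List.map_cons, List.cons.injEq] at ht
                obtain ⟨hbb, hz, htl2⟩ := ht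
                have htl3 : tl = [] := by simpa using hlen
                subst htl3
                have hdz : d = z := by
                  have hdmem := r.reverse.end_mem_support
                  rw [h1, htl] at hdmem
                  simp at hdmem
                  tauto
                subst hdz
                have hadjcz : G.Adj c d := by
                  have hch := r.reverse.isChain_adj_support
                  rw [h1, htl] at hch
                  exact (List.isChain_cons_cons.mp hch).1
                have hcx : c = xa a ha := U1 a ha c hc h.symm
                exact K3 a ha d hd (hcx ▸ hadjcz) hz.symm
          · exact hna ht
  refine ⟨φ, hφmem, ?_⟩
  intro u v q hq hrep
  by_cases hu : u ∈ s
  · by_cases hv : v ∈ s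
    · obtain ⟨hsub, hnr, _, _⟩ := H3 u v q hq hu hv
      rw [mapφ0 q hsub] at hrep
      exact hnr hrep
    · refine key v u q.reverse hq.reverse hv ?_
      rw [SimpleGraph.Walk.support_reverse, List.map_reverse]
      exact CatAux.RepList.rev hrep
  · exact key u v q hq hu hrep
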